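/- Let w be a finite palindromic word over the positive integers beginning and ending in 2, of the form w = 2 b₂ b₃ … b_{l−1} 2. Let w' be the word obtained from w by replacing the final 2 with the two letters 1,1 (so w' = 2 b₂ … b_{l−1} 1 1). If the word w' followed by a 2 (i.e. w'2 = 2 b₂ … b_{l−1} 1 1 2) is a perfect power δ^k of a shorter word δ with k ≥ 2, then a contradiction arises; that is, w'2 is not a perfect power of a proper subword. -/

import Mathlib

theorem getElem_flatten_replicate {α : Type*} (δ : List α) (hd : 0 < δ.length) :
    ∀ (k i : ℕ) (h : i < ((List.replicate k δ).flatten).length),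
      ((List.replicate k δ).flatten)[i] = δ[i % δ.length]'(Nat.mod_lt _ hd) := by
  intro k
  induction k with
  | zero => intro i h; simp at h
  | succ k ih =>
    intro i h
    have e : (List.replicate (k+1) δ).flatten = δ ++ (List.replicate k δ).flatten := by
      rw [List.replicate_succ, List.flatten_cons]
    rw [List.getElem_of_eq e]
    rcases lt_or_ge i δ.length with hi | hi
    · rw [List.getElem_append_left hi]
      congr 1
      exact (Nat.mod_eq_of_lt hi).symm
    · rw [List.getElem_append_right hi, ih]
      congr 1
      exact (Nat.mod_eq_sub_mod hi).symm

theorem palindrome_not_power (mid : List ℕ)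
    (hpal : (2 :: mid ++ [2] : List ℕ).reverse = 2 :: mid ++ [2]) :
    ¬ ∃ (δ : List ℕ) (k : ℕ), 2 ≤ k ∧
      δ.length < (2 :: mid ++ [1, 1, 2] : List ℕ).length ∧
      (List.replicate k δ).flatten = 2 :: mid ++ [1, 1, 2] := by
  rintro ⟨δ, k, hk, hlt, heq⟩
  have hmid : mid.reverse = mid := by simpa using hpal
  have hd : 0 < δ.length := by
    cases δ with
    | nil => simp at heq
    | cons a t => simp
  have hn : k * δ.length = mid.length + 4 := by
    have := congrArg List.length heq
    simpa using this
  set d := δ.length with hdd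
  set u : List ℕ := 2 :: mid ++ [1, 1, 2] with hu
  have hulen : u.length = mid.length + 4 := by simp [hu]
  -- general getElem? fact about u
  have key : ∀ i : ℕ, i < mid.length + 4 → u[i]? = δ[i % d]? := by
    intro i h
    rw [List.getElem?_eq_getElem (by omega), List.getElem?_eq_getElem (Nat.mod_lt _ hd)]
    have := getElem_flatten_replicate δ hd k i (by rw [heq, hulen]; exact h)
    exact congrArg some ((List.getElem_of_eq heq.symm _).trans this)
  -- values of u at the ends
  have hulast : u[mid.length + 3]? = some 2 := by
    rw [List.getElem?_eq_getElem (by omega)]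
    simp [hu, List.getElem_cons_succ, List.getElem_append_right]
  have hu2 : u[mid.length + 2]? = some 1 := by
    rw [List.getElem?_eq_getElem (by omega)]
    simp [hu, List.getElem_cons_succ, List.getElem_append_right]
  have hu1 : u[mid.length + 1]? = some 1 := by
    rw [List.getElem?_eq_getElem (by omega)]
    simp [hu, List.getElem_cons_succ, List.getElem_append_right]
  have humid : ∀ j : ℕ, j < mid.length → u[j + 1]? = mid[j]? := by
    intro j hj
    rw [List.getElem?_eq_getElem (by omega), List.getElem?_eq_getElem hj]
    simp [hu, List.getElem_cons_succ, List.getElem_append, hj]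
  rcases lt_or_ge d 3 with hd3 | hd3
  · -- d = 1 or 2
    have h1 : δ[0]? = some 2 := by
      have := key 0 (by omega)
      rw [List.getElem?_eq_getElem (by simp [hu])] at this
      simpa [hu, Nat.mod_eq_of_lt hd] using this.symm
    have : d = 1 ∨ d = 2 := by omega
    rcases this with h | h
    · have := key (mid.length + 1) (by omega)
      rw [hu1, h, Nat.mod_one, h1] at this
      simp at this
    · rw [h] at hn
      have hk2 : (mid.length + 2) % 2 = 0 := by omega
      have := key (mid.length + 2) (by omega)
      rw [hu2, h, hk2, h1] at this
      simp at this
  · -- d ≥ 3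
    have hkd : 2 * d ≤ mid.length + 4 := by
      calc 2 * d ≤ k * d := Nat.mul_le_mul_right d hk
      _ = mid.length + 4 := hn
    have hdle : d ≤ mid.length + 1 := by omega
    have hk1 : (k - 1) * d = k * d - d := by rw [Nat.sub_mul, one_mul]
    have hk2' : (k - 2) * d = k * d - 2 * d := by rw [Nat.sub_mul]
    have e1 : (mid.length + 3) % d = d - 1 := by
      have h2 : mid.length + 3 = (d - 1) + (k - 1) * d := by omega
      rw [h2, Nat.add_mul_mod_self_right, Nat.mod_eq_of_lt (by omega)]
    have e2 : (mid.length + 2) % d = d - 2 := by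
      have h2 : mid.length + 2 = (d - 2) + (k - 1) * d := by omega
      rw [h2, Nat.add_mul_mod_self_right, Nat.mod_eq_of_lt (by omega)]
    have e4 : (mid.length + 2 - d) % d = d - 2 := by
      have h2 : mid.length + 2 - d = (d - 2) + (k - 2) * d := by omega
      rw [h2, Nat.add_mul_mod_self_right, Nat.mod_eq_of_lt (by omega)]
    have e3 : (d - 1) % d = d - 1 := Nat.mod_eq_of_lt (by omega)
    -- δ values
    have hδ1 : δ[d - 1]? = some 2 := by
      have := key (mid.length + 3) (by omega)
      rw [hulast, e1] at this; exact this.symm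
    have hδ2 : δ[d - 2]? = some 1 := by
      have := key (mid.length + 2) (by omega)
      rw [hu2, e2] at this; exact this.symm
    -- u values inside mid, via period
    have c1 : u[d - 1]? = some 2 := by
      have := key (d - 1) (by omega)
      rw [e3, hδ1] at this; exact this
    have c2 : u[mid.length + 2 - d]? = some 1 := by
      have := key (mid.length + 2 - d) (by omega)
      rw [e4, hδ2] at this; exact this
    -- express both as mid entries
    have m1 : mid[d - 2]? = some 2 := by
      have h2 : d - 1 = (d - 2) + 1 := by omega
      rw [← humid (d - 2) (by omega), ← h2]; exact c1
    have m2 : mid[mid.length + 1 - d]? = some 1 := by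
      have h2 : mid.length + 2 - d = (mid.length + 1 - d) + 1 := by omega
      rw [← humid (mid.length + 1 - d) (by omega), ← h2]; exact c2
    -- palindrome
    have mpal : mid[d - 2]? = mid[mid.length + 1 - d]? := by
      conv_lhs => rw [← hmid]
      rw [List.getElem?_reverse (by omega)]
      congr 1
      omega
    rw [m1, m2] at mpal
    simp at mpal
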